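/- Statistical economies of scale for the Erlang-B system: for all naturals 1 ≤ N < N' and every real a > 0, scaling both the number of servers and the offered load by the same factor strictly decreases the blocking probability, i.e. B(N', (N'/N)·a) < B(N, a). -/

import Mathlib

open Finset

/-- The Erlang-B blocking probability with `M` servers and offered load `a`:
`B(M, a) = (a^M / M!) / (∑_{j=0}^{M} a^j / j!)`. -/
noncomputable def ErlangB (M : ℕ) (a : ℝ) : ℝ :=
  (a ^ M / (Nat.factorial M : ℝ)) / (∑ j ∈ Finset.range (M + 1), a ^ j / (Nat.factorial j : ℝ))

/-- Inverse blocking probability as a sum of products. -/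
noncomputable def invB (M : ℕ) (a : ℝ) : ℝ :=
  ∑ k ∈ Finset.range (M + 1), ∏ i ∈ Finset.range k, (((M : ℝ) - i) / a)

lemma prod_cast_desc (M k : ℕ) (hk : k ≤ M) :
    ∏ i ∈ Finset.range k, ((M : ℝ) - i) = (M.descFactorial k : ℝ) := by
  rw [Nat.descFactorial_eq_prod_range, Nat.cast_prod]
  refine Finset.prod_congr rfl fun i hi => ?_
  rw [Finset.mem_range] at hi
  rw [Nat.cast_sub (le_of_lt (lt_of_lt_of_le hi hk))]

lemma erlangB_eq_inv (M : ℕ) (a : ℝ) (ha : 0 < a) :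
    ErlangB M a = 1 / invB M a := by
  have hS : (∑ j ∈ Finset.range (M + 1), a ^ j / (Nat.factorial j : ℝ))
      = (a ^ M / (Nat.factorial M : ℝ)) * invB M a := by
    rw [invB, Finset.mul_sum]
    rw [← Finset.sum_range_reflect (fun k => (a ^ M / (Nat.factorial M : ℝ)) *
      ∏ i ∈ Finset.range k, (((M : ℝ) - i) / a)) (M + 1)]
    refine Finset.sum_congr rfl fun j hj => ?_
    rw [Finset.mem_range, Nat.lt_succ_iff] at hj
    have hMj : M + 1 - 1 - j = M - j := by omega
    rw [hMj, Finset.prod_div_distrib, Finset.prod_const,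
      prod_cast_desc M (M - j) (Nat.sub_le _ _)]
    have hfac : ((M - (M - j)).factorial : ℕ) * M.descFactorial (M - j) = M.factorial :=
      Nat.factorial_mul_descFactorial (Nat.sub_le _ _)
    have hjj : M - (M - j) = j := by omega
    rw [hjj] at hfac
    have hfacR : (j.factorial : ℝ) * (M.descFactorial (M - j) : ℝ) = (M.factorial : ℝ) := by
      exact_mod_cast congrArg (Nat.cast (R := ℝ)) hfac
    have haM : a ^ M = a ^ j * a ^ (M - j) := by
      rw [← pow_add]; congr 1; omega
    have hj0 : (j.factorial : ℝ) ≠ 0 := Nat.cast_ne_zero.mpr (Nat.factorial_ne_zero j)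
    have hM0 : (M.factorial : ℝ) ≠ 0 := Nat.cast_ne_zero.mpr (Nat.factorial_ne_zero M)
    have ha0 : a ≠ 0 := ne_of_gt ha
    field_simp
    rw [haM, ← hfacR, Finset.card_range]
    ring
  rw [ErlangB, hS]
  have hx : a ^ M / (Nat.factorial M : ℝ) ≠ 0 :=
    div_ne_zero (pow_ne_zero _ (ne_of_gt ha))
      (Nat.cast_ne_zero.mpr (Nat.factorial_ne_zero M))
  nth_rewrite 1 [show (a ^ M / (Nat.factorial M : ℝ)) = (a ^ M / (Nat.factorial M : ℝ)) * 1
    from (mul_one _).symm]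
  rw [mul_div_mul_left _ _ hx]

theorem erlangB_economies_of_scale (N N' : ℕ) (hN : 1 ≤ N) (hNN' : N < N')
    (a : ℝ) (ha : 0 < a) :
    ErlangB N' ((N' : ℝ) / (N : ℝ) * a) < ErlangB N a := by
  set b : ℝ := (N' : ℝ) / (N : ℝ) * a with hbdef
  have hNpos : (0 : ℝ) < (N : ℝ) := by exact_mod_cast hN
  have hN'pos : (0 : ℝ) < (N' : ℝ) := by
    have : 0 < N' := lt_of_le_of_lt (Nat.zero_le N) hNN'
    exact_mod_cast this
  have hb : 0 < b := mul_pos (div_pos hN'pos hNpos) ha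
  rw [erlangB_eq_inv N a ha, erlangB_eq_inv N' b hb]
  -- positivity of invB N a
  have hterm_nonneg : ∀ (M : ℕ) (c : ℝ), 0 < c → ∀ k ∈ Finset.range (M + 1),
      0 ≤ ∏ i ∈ Finset.range k, (((M : ℝ) - i) / c) := by
    intro M c hc k hk
    rw [Finset.mem_range, Nat.lt_succ_iff] at hk
    refine Finset.prod_nonneg fun i hi => ?_
    rw [Finset.mem_range] at hi
    have : (i : ℝ) ≤ (M : ℝ) := by exact_mod_cast le_of_lt (lt_of_lt_of_le hi hk)
    exact div_nonneg (by linarith) (le_of_lt hc)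
  have hSpos : 0 < invB N a := by
    refine Finset.sum_pos' (hterm_nonneg N a ha) ⟨0, ?_, ?_⟩
    · simp
    · simp
  -- step 1 : invB N a ≤ partial sum for N'
  have hstep1 : invB N a ≤ ∑ k ∈ Finset.range (N + 1),
      ∏ i ∈ Finset.range k, (((N' : ℝ) - i) / b) := by
    refine Finset.sum_le_sum fun k hk => ?_
    rw [Finset.mem_range, Nat.lt_succ_iff] at hk
    refine Finset.prod_le_prod (fun i hi => ?_) (fun i hi => ?_)
    · rw [Finset.mem_range] at hi
      have : (i : ℝ) ≤ (N : ℝ) := by exact_mod_cast le_of_lt (lt_of_lt_of_le hi hk)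
      exact div_nonneg (by linarith) (le_of_lt ha)
    · rw [Finset.mem_range] at hi
      have hi' : (0 : ℝ) ≤ (i : ℝ) := Nat.cast_nonneg i
      have hNle : (N : ℝ) ≤ (N' : ℝ) := by exact_mod_cast le_of_lt hNN'
      rw [div_le_div_iff₀ ha hb, hbdef]
      rw [← mul_le_mul_iff_of_pos_right hNpos]
      have heq : ((N : ℝ) - i) * ((N' : ℝ) / (N : ℝ) * a) * (N : ℝ)
          = ((N : ℝ) - i) * (N' : ℝ) * a := by
        field_simp
      rw [heq]
      nlinarith [mul_nonneg (mul_nonneg hi' (sub_nonneg.mpr hNle)) ha.le]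
  -- step 2 : partial sum is strictly less than invB N' b
  have hstep2 : (∑ k ∈ Finset.range (N + 1),
      ∏ i ∈ Finset.range k, (((N' : ℝ) - i) / b)) < invB N' b := by
    refine Finset.sum_lt_sum_of_subset ?_ (i := N + 1) ?_ ?_ ?_ ?_
    · exact Finset.range_subset_range.mpr (by omega)
    · exact Finset.mem_range.mpr (by omega)
    · simp
    · refine Finset.prod_pos fun i hi => ?_
      rw [Finset.mem_range] at hi
      have : (i : ℝ) < (N' : ℝ) := by exact_mod_cast lt_of_lt_of_le hi (by omega)
      exact div_pos (by linarith) hb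
    · intro k hk _
      exact hterm_nonneg N' b hb k hk
  have hlt : invB N a < invB N' b := lt_of_le_of_lt hstep1 hstep2
  exact one_div_lt_one_div_of_lt hSpos hlt
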